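/- Let (g(x))_{x∈ℤ^d} be a translation-invariant random field, D ⊂ ℤ^d a finite set, x_0 ∈ ℤ^d, and for i ≥ 0 set D_i := D + i·x_0 and X_i := max_{x∈D_i} g(x). Assume k ≥ 1 and that μ(s) := E[max_{|x|_1≤s, |y|_1≤s} |g(x) − g(y)|] is finite, where s is the ℓ¹ diameter of D plus 2k|x_0|_1 (and D contains 0). Then E[(X_0 − max{X_1, ..., X_{k+1}})⁺] ≤ 2μ(s)/k. -/

import Mathlib

open MeasureTheory Finset

lemma integrable_sup'_aux {Ω ι : Type*} [MeasureSpace Ω] (F : Finset ι) (hF : F.Nonempty)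
    (f : ι → Ω → ℝ) (h : ∀ i ∈ F, Integrable (f i)) :
    Integrable (fun ω => F.sup' hF (fun i => f i ω)) := by
  induction hF using Finset.Nonempty.cons_induction with
  | singleton a => simpa using h a (by simp)
  | cons a s ha hs ih =>
    simp only [Finset.sup'_cons hs]
    exact (h a (by simp)).sup (ih fun i hi => h i (by simp [hi]))

lemma measurable_sup'_aux {α ι : Type*} [MeasurableSpace α] (F : Finset ι) (hF : F.Nonempty)
    (f : ι → α → ℝ) (h : ∀ i ∈ F, Measurable (f i)) :
    Measurable (fun a => F.sup' hF (fun i => f i a)) := by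
  induction hF using Finset.Nonempty.cons_induction with
  | singleton a => simpa using h a (by simp)
  | cons a s ha hs ih =>
    simp only [Finset.sup'_cons hs]
    exact (h a (by simp)).max (ih fun i hi => h i (by simp [hi]))

lemma range_ne (n : ℕ) : (Finset.range (n+1)).Nonempty := ⟨0, by simp⟩

lemma tv_bound (k : ℕ) (hk : 1 ≤ k) (x : ℕ → ℝ) :
    ∑ i ∈ Finset.range k,
        |(Finset.range (k+1)).sup' (range_ne k) (fun j => x (i+j))
          - (Finset.range (k+1)).sup' (range_ne k) (fun j => x (i+1+j))|
      ≤ ((Finset.range (k+1)).sup' (range_ne k) (fun j => x (k+j)) - x k)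
        + ((Finset.range (k+1)).sup' (range_ne k) (fun j => x (0+j)) - x k) := by
  set m : ℕ → ℝ := fun i => (Finset.range (k+1)).sup' (range_ne k) (fun j => x (i+j)) with hm
  set N : ℕ → ℝ := fun i => (Finset.range (i+1)).sup' (range_ne i) (fun j => x (k+j)) with hN
  set P : ℕ → ℝ := fun i => (Finset.range (k-i+1)).sup' (range_ne (k-i)) (fun j => x (i+j)) with hP
  have hNmono : ∀ i, N i ≤ N (i+1) := by
    intro i
    apply Finset.sup'_le
    intro j hj
    exact Finset.le_sup' (f := fun j => x (k+j)) (by simp only [Finset.mem_range] at hj ⊢; omega)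
  have hPmono : ∀ i, i < k → P (i+1) ≤ P i := by
    intro i hi
    apply Finset.sup'_le
    intro j hj
    simp only [Finset.mem_range] at hj
    have h1 : (j+1) ∈ Finset.range (k-i+1) := by simp only [Finset.mem_range]; omega
    have := Finset.le_sup' (f := fun j => x (i+j)) h1
    rw [show i + (j+1) = i+1+j by omega] at this
    exact this
  have hNm : ∀ i, i ≤ k → N i ≤ m i := by
    intro i hi
    apply Finset.sup'_le
    intro j hj
    simp only [Finset.mem_range] at hj
    have h1 : (k+j-i) ∈ Finset.range (k+1) := by simp only [Finset.mem_range]; omega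
    have := Finset.le_sup' (f := fun j => x (i+j)) h1
    rw [show i + (k+j-i) = k+j by omega] at this
    exact this
  have hPm : ∀ i, P i ≤ m i := by
    intro i
    apply Finset.sup'_le
    intro j hj
    simp only [Finset.mem_range] at hj
    exact Finset.le_sup' (f := fun j => x (i+j)) (by simp only [Finset.mem_range]; omega)
  have step : ∀ i, i < k → |m i - m (i+1)| ≤ (N (i+1) - N i) + (P i - P (i+1)) := by
    intro i hi
    have h1 : m (i+1) - m i ≤ N (i+1) - N i := by
      have : m (i+1) ≤ m i + (N (i+1) - N i) := by
        apply Finset.sup'_le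
        intro j hj
        simp only [Finset.mem_range] at hj
        by_cases hjk : j = k
        · rw [hjk]
          have ha : x (i+1+k) ≤ N (i+1) := by
            have h1 : (i+1) ∈ Finset.range (i+1+1) := by simp
            have := Finset.le_sup' (f := fun j => x (k+j)) h1
            rw [show k + (i+1) = i+1+k by omega] at this
            exact this
          have hb := hNm i (by omega)
          linarith
        · have ha : x (i+1+j) ≤ m i := by
            have h1 : (j+1) ∈ Finset.range (k+1) := by simp only [Finset.mem_range]; omega
            have := Finset.le_sup' (f := fun j => x (i+j)) h1
            rw [show i + (j+1) = i+1+j by omega] at this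
            exact this
          have hb := hNmono i
          linarith
      linarith
    have h2 : m i - m (i+1) ≤ P i - P (i+1) := by
      have : m i ≤ m (i+1) + (P i - P (i+1)) := by
        apply Finset.sup'_le
        intro j hj
        simp only [Finset.mem_range] at hj
        by_cases hj0 : j = 0
        · subst hj0
          have ha : x (i+0) ≤ P i := by
            exact Finset.le_sup' (f := fun j => x (i+j)) (by simp)
          have hb := hPm (i+1)
          linarith
        · have ha : x (i+j) ≤ m (i+1) := by
            have h1 : (j-1) ∈ Finset.range (k+1) := by simp only [Finset.mem_range]; omega
            have := Finset.le_sup' (f := fun j => x (i+1+j)) h1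
            rw [show i+1 + (j-1) = i+j by omega] at this
            exact this
          have hb := hPmono i hi
          linarith
      linarith
    have h3 : 0 ≤ N (i+1) - N i := by have := hNmono i; linarith
    have h4 : 0 ≤ P i - P (i+1) := by have := hPmono i hi; linarith
    rw [abs_sub_le_iff]
    constructor <;> linarith
  calc ∑ i ∈ Finset.range k, |m i - m (i+1)|
      ≤ ∑ i ∈ Finset.range k, ((N (i+1) - N i) + (P i - P (i+1))) := by
        apply Finset.sum_le_sum
        intro i hi
        exact step i (Finset.mem_range.mp hi)
    _ = (N k - N 0) + (P 0 - P k) := by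
        rw [Finset.sum_add_distrib, Finset.sum_range_sub N, Finset.sum_range_sub' P]
    _ ≤ (m k - x k) + (m 0 - x k) := by
        have e1 : N 0 = x k := by simp [hN]
        have e2 : P k = x k := by simp [hP]
        have e3 : P 0 = m 0 := by simp [hP, hm]
        have e4 : N k = m k := by
          apply le_antisymm
          · exact hNm k le_rfl
          · apply Finset.sup'_le
            intro j hj
            exact Finset.le_sup' (f := fun j => x (k+j)) hj
        rw [e1, e2, e3, e4]

theorem moving_maxima_bound {Ω : Type*} [MeasureSpace Ω]
    [IsProbabilityMeasure (volume : Measure Ω)]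
    (d k : ℕ) (hk : 1 ≤ k)
    (g : Ω → (Fin d → ℤ) → ℝ) (hgmeas : Measurable g)
    (hgint : ∀ x : Fin d → ℤ, Integrable (fun ω => g ω x))
    (hinv : ∀ v : Fin d → ℤ,
      Measure.map (fun ω => fun x => g ω (x + v)) volume = Measure.map g volume)
    (D : Finset (Fin d → ℤ)) (hD : D.Nonempty) (h0D : 0 ∈ D)
    (x₀ : Fin d → ℤ) (s : ℤ)
    (hs : s = (D ×ˢ D).sup' (hD.product hD) (fun p => ∑ j, |p.1 j - p.2 j|)
      + 2 * (k : ℤ) * ∑ j, |x₀ j|)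
    (μ : ℝ)
    (hμ : ∀ (F : Finset (Fin d → ℤ)) (hF : F.Nonempty),
      (∀ x ∈ F, ∑ j, |x j| ≤ s) →
      ∫ ω, (F ×ˢ F).sup' (hF.product hF) (fun p => |g ω p.1 - g ω p.2|) ≤ μ) :
    ∫ ω, max
        (D.sup' hD (fun x => g ω x)
          - (Finset.Icc 1 (k + 1)).sup' (Finset.nonempty_Icc.mpr (by omega))
              (fun i => D.sup' hD (fun x => g ω (x + i • x₀)))) 0
      ≤ 2 * μ / (k : ℝ) := by
  classical
  set X : ℕ → Ω → ℝ := fun i ω => D.sup' hD (fun x => g ω (x + i • x₀)) with hX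
  set M : ℕ → Ω → ℝ :=
    fun i ω => (Finset.range (k+1)).sup' (range_ne k) (fun j => X (i+j) ω) with hM
  have hXint : ∀ i, Integrable (X i) :=
    fun i => integrable_sup'_aux D hD _ (fun x _ => hgint _)
  have hMint : ∀ i, Integrable (M i) :=
    fun i => integrable_sup'_aux _ (range_ne k) _ (fun j _ => hXint (i+j))
  have habs : ∀ i, Integrable (fun ω => |M i ω - M (i+1) ω|) :=
    fun i => ((hMint i).sub (hMint (i+1))).abs
  -- the big finite set F
  set F : Finset (Fin d → ℤ) :=
    ((Finset.range (2*k+1)) ×ˢ D).image (fun p => p.2 + p.1 • x₀) with hF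
  have hFne : F.Nonempty := by
    refine ⟨(0:Fin d → ℤ) + (0:ℕ) • x₀, ?_⟩
    exact Finset.mem_image.mpr ⟨(0, 0), Finset.mem_product.mpr ⟨by simp, h0D⟩, rfl⟩
  have hmemF : ∀ (i : ℕ), i ≤ 2*k → ∀ x ∈ D, x + i • x₀ ∈ F := by
    intro i hi x hx
    exact Finset.mem_image.mpr ⟨(i, x),
      Finset.mem_product.mpr ⟨Finset.mem_range.mpr (by omega), hx⟩, rfl⟩
  have hFs : ∀ y ∈ F, ∑ j, |y j| ≤ s := by
    intro y hy
    obtain ⟨p, hp, rfl⟩ := Finset.mem_image.mp hy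
    obtain ⟨hp1, hp2⟩ := Finset.mem_product.mp hp
    rw [Finset.mem_range] at hp1
    have h1 : ∑ j, |(p.2 + p.1 • x₀) j| ≤ ∑ j, |p.2 j| + (p.1 : ℤ) * ∑ j, |x₀ j| := by
      rw [Finset.mul_sum, ← Finset.sum_add_distrib]
      apply Finset.sum_le_sum
      intro j _
      have : (p.2 + p.1 • x₀) j = p.2 j + (p.1 : ℤ) * x₀ j := by
        simp [Pi.add_apply, Pi.smul_apply, nsmul_eq_mul]
      rw [this]
      calc |p.2 j + (p.1:ℤ) * x₀ j| ≤ |p.2 j| + |(p.1:ℤ) * x₀ j| := abs_add_le _ _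
        _ = |p.2 j| + (p.1:ℤ) * |x₀ j| := by
            rw [abs_mul, abs_of_nonneg (by positivity : (0:ℤ) ≤ (p.1:ℤ))]
    have h2 : ∑ j, |p.2 j| ≤ (D ×ˢ D).sup' (hD.product hD) (fun p => ∑ j, |p.1 j - p.2 j|) := by
      have hmem : (p.2, (0:Fin d → ℤ)) ∈ D ×ˢ D := Finset.mem_product.mpr ⟨hp2, h0D⟩
      have := Finset.le_sup' (f := fun q : (Fin d → ℤ) × (Fin d → ℤ) => ∑ j, |q.1 j - q.2 j|) hmem
      simpa only [Pi.zero_apply, sub_zero] using this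
    have h3 : (p.1 : ℤ) * ∑ j, |x₀ j| ≤ 2 * (k : ℤ) * ∑ j, |x₀ j| := by
      apply mul_le_mul_of_nonneg_right
      · exact_mod_cast (by omega : p.1 ≤ 2*k)
      · positivity
    rw [hs]; linarith
  set S : Ω → ℝ :=
    fun ω => (F ×ˢ F).sup' (hFne.product hFne) (fun p => |g ω p.1 - g ω p.2|) with hS
  have hSint : Integrable S :=
    integrable_sup'_aux _ (hFne.product hFne) _ (fun p _ => ((hgint p.1).sub (hgint p.2)).abs)
  have hSμ : ∫ ω, S ω ≤ μ := hμ F hFne hFs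
  -- pointwise bound on M via S
  have hMS : ∀ ω, ∀ i ≤ k, M i ω ≤ X k ω + S ω := by
    intro ω i hi
    apply Finset.sup'_le
    intro j hj
    rw [Finset.mem_range] at hj
    apply Finset.sup'_le
    intro x hx
    have hb : g ω ((0:Fin d → ℤ) + k • x₀) ≤ X k ω :=
      Finset.le_sup' (f := fun x => g ω (x + k • x₀)) h0D
    have hpair : ((x + (i+j) • x₀, (0:Fin d → ℤ) + k • x₀) : _ × _) ∈ F ×ˢ F :=
      Finset.mem_product.mpr ⟨hmemF (i+j) (by omega) x hx, hmemF k (by omega) 0 h0D⟩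
    have hle : |g ω (x + (i+j) • x₀) - g ω ((0:Fin d → ℤ) + k • x₀)| ≤ S ω :=
      Finset.le_sup' (f := fun p : _ × _ => |g ω p.1 - g ω p.2|) hpair
    have := le_abs_self (g ω (x + (i+j) • x₀) - g ω ((0:Fin d → ℤ) + k • x₀))
    linarith
  -- pointwise TV bound
  have ptTV : ∀ ω, ∑ i ∈ Finset.range k, |M i ω - M (i+1) ω| ≤ 2 * S ω := by
    intro ω
    have h := tv_bound k hk (fun n => X n ω)
    have hMk := hMS ω k le_rfl
    have hM0 := hMS ω 0 (by omega)
    calc ∑ i ∈ Finset.range k, |M i ω - M (i+1) ω|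
        ≤ (M k ω - X k ω) + (M 0 ω - X k ω) := h
      _ ≤ 2 * S ω := by linarith
  -- translation invariance transfer
  have hshift : ∀ (φ : ((Fin d → ℤ) → ℝ) → ℝ), Measurable φ → ∀ v : Fin d → ℤ,
      ∫ ω, φ (fun x => g ω (x + v)) = ∫ ω, φ (g ω) := by
    intro φ hφ v
    have h1 : Measurable (fun ω => fun x => g ω (x + v)) :=
      measurable_pi_lambda _ (fun x => (measurable_pi_apply (x+v)).comp hgmeas)
    rw [← integral_map h1.aemeasurable hφ.aestronglyMeasurable, hinv v,
      integral_map hgmeas.aemeasurable hφ.aestronglyMeasurable]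
  set Φ : ((Fin d → ℤ) → ℝ) → ℝ := fun f =>
    |(Finset.range (k+1)).sup' (range_ne k) (fun j => D.sup' hD (fun x => f (x + j • x₀)))
      - (Finset.range (k+1)).sup' (range_ne k)
          (fun j => D.sup' hD (fun x => f (x + (1+j) • x₀)))| with hΦ
  have hΦmeas : Measurable Φ := by
    apply Measurable.abs
    apply Measurable.sub <;>
    · exact measurable_sup'_aux _ (range_ne k) _ (fun j _ =>
        measurable_sup'_aux _ hD _ (fun x _ => measurable_pi_apply _))
  have hshift_eq : ∀ (i : ℕ) (ω : Ω), Φ (fun x => g ω (x + i • x₀)) = |M i ω - M (i+1) ω| := by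
    intro i ω
    have inner1 : ∀ a : ℕ, D.sup' hD (fun x => g ω ((x + a • x₀) + i • x₀))
        = D.sup' hD (fun x => g ω (x + (i + a) • x₀)) := by
      intro a
      apply Finset.sup'_congr hD rfl
      intro x _
      congr 1
      rw [add_smul]
      abel
    simp only [hΦ, hM, hX]
    have eA : ((Finset.range (k+1)).sup' (range_ne k)
          fun j => D.sup' hD fun x => g ω (x + j • x₀ + i • x₀))
        = (Finset.range (k+1)).sup' (range_ne k)
          fun j => D.sup' hD fun x => g ω (x + (i + j) • x₀) :=
      Finset.sup'_congr (range_ne k) rfl (fun j _ => inner1 j)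
    have eB : ((Finset.range (k+1)).sup' (range_ne k)
          fun j => D.sup' hD fun x => g ω (x + (1+j) • x₀ + i • x₀))
        = (Finset.range (k+1)).sup' (range_ne k)
          fun j => D.sup' hD fun x => g ω (x + (i + 1 + j) • x₀) := by
      apply Finset.sup'_congr (range_ne k) rfl
      intro j _
      rw [inner1 (1+j), show i + (1+j) = i+1+j by omega]
    rw [eA, eB]
  have hint_eq : ∀ i : ℕ, ∫ ω, |M i ω - M (i+1) ω| = ∫ ω, |M 0 ω - M 1 ω| := by
    intro i
    have h1 : (fun ω => |M i ω - M (i+1) ω|) = fun ω => Φ (fun x => g ω (x + i • x₀)) :=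
      funext fun ω => (hshift_eq i ω).symm
    have h0 : (fun ω => |M 0 ω - M 1 ω|) = fun ω => Φ (fun x => g ω (x + (0:ℕ) • x₀)) :=
      funext fun ω => (hshift_eq 0 ω).symm
    rw [h1, h0, hshift Φ hΦmeas ((i:ℕ) • x₀), hshift Φ hΦmeas ((0:ℕ) • x₀)]
  -- main estimate
  have hsum : (k:ℝ) * ∫ ω, |M 0 ω - M 1 ω| ≤ 2 * μ := by
    have e1 : (k:ℝ) * ∫ ω, |M 0 ω - M 1 ω|
        = ∑ i ∈ Finset.range k, ∫ ω, |M i ω - M (i+1) ω| := by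
      rw [Finset.sum_congr rfl (fun i _ => hint_eq i), Finset.sum_const, Finset.card_range,
        nsmul_eq_mul]
    rw [e1, ← integral_finset_sum _ (fun i _ => habs i)]
    calc ∫ ω, ∑ i ∈ Finset.range k, |M i ω - M (i+1) ω|
        ≤ ∫ ω, 2 * S ω := integral_mono (integrable_finset_sum _ (fun i _ => habs i))
          (hSint.const_mul 2) ptTV
      _ = 2 * ∫ ω, S ω := integral_const_mul 2 S
      _ ≤ 2 * μ := by linarith
  -- identify the target integrand
  have hident : ∀ ω, max
      (D.sup' hD (fun x => g ω x)
        - (Finset.Icc 1 (k + 1)).sup' (Finset.nonempty_Icc.mpr (by omega))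
            (fun i => D.sup' hD (fun x => g ω (x + i • x₀)))) 0
      = max (X 0 ω - M 1 ω) 0 := by
    intro ω
    have e1 : D.sup' hD (fun x => g ω x) = X 0 ω := by
      apply Finset.sup'_congr hD rfl
      intro x _
      simp
    have e2 : (Finset.Icc 1 (k + 1)).sup' (Finset.nonempty_Icc.mpr (by omega))
        (fun i => D.sup' hD (fun x => g ω (x + i • x₀))) = M 1 ω := by
      apply le_antisymm
      · apply Finset.sup'_le
        intro i hi
        rw [Finset.mem_Icc] at hi
        have h1 : (i-1) ∈ Finset.range (k+1) := by rw [Finset.mem_range]; omega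
        have := Finset.le_sup' (f := fun j => X (1+j) ω) h1
        rw [show 1 + (i-1) = i by omega] at this
        exact this
      · apply Finset.sup'_le
        intro j hj
        rw [Finset.mem_range] at hj
        exact Finset.le_sup' (f := fun i => X i ω) (Finset.mem_Icc.mpr (by omega))
    rw [e1, e2]
  have hint1 : Integrable (fun ω => max (X 0 ω - M 1 ω) 0) :=
    ((hXint 0).sub (hMint 1)).pos_part
  have hpt : ∀ ω, max (X 0 ω - M 1 ω) 0 ≤ |M 0 ω - M 1 ω| := by
    intro ω
    have hX0M0 : X 0 ω ≤ M 0 ω := by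
      have h1 : (0:ℕ) ∈ Finset.range (k+1) := by simp
      exact Finset.le_sup' (f := fun j => X (0+j) ω) h1
    have := le_abs_self (M 0 ω - M 1 ω)
    have := abs_nonneg (M 0 ω - M 1 ω)
    apply max_le <;> linarith
  have hfinal : ∫ ω, max (X 0 ω - M 1 ω) 0 ≤ ∫ ω, |M 0 ω - M 1 ω| :=
    integral_mono hint1 (habs 0) hpt
  have hpos : (0:ℝ) < k := by exact_mod_cast hk
  have hnn : 0 ≤ ∫ ω, max (X 0 ω - M 1 ω) 0 :=
    integral_nonneg (fun ω => le_max_right _ _)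
  calc ∫ ω, max
        (D.sup' hD (fun x => g ω x)
          - (Finset.Icc 1 (k + 1)).sup' (Finset.nonempty_Icc.mpr (by omega))
              (fun i => D.sup' hD (fun x => g ω (x + i • x₀)))) 0
      = ∫ ω, max (X 0 ω - M 1 ω) 0 := by
        apply integral_congr_ae
        exact Filter.Eventually.of_forall hident
    _ ≤ 2 * μ / (k:ℝ) := by
        rw [le_div_iff₀ hpos]
        nlinarith [hfinal, hsum]
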